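/- Let {X_n} be i.i.d. standard normal random variables. Then (max_{1≤k≤n} X_k)/√(2 log n) → 1 almost surely. -/

import Mathlib

open MeasureTheory ProbabilityTheory Filter
open scoped ENNReal

/-- `log x = ln (e ∨ x)` as in the paper. -/
noncomputable def Log (x : ℝ) : ℝ := Real.log (max (Real.exp 1) x)

/-- `pmax X n ω = max_{1 ≤ k ≤ n} X_k(ω)` (indexed `0,…,n-1`), junk value at `n = 0`. -/
noncomputable def pmax {Ω : Type*} (X : ℕ → Ω → ℝ) (n : ℕ) (ω : Ω) : ℝ :=
  if h : n = 0 then X 0 ω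
  else (Finset.range n).sup' (Finset.nonempty_range_iff.mpr h) fun k => X k ω

lemma aux_Log_ge_one (x : ℝ) : 1 ≤ Log x := by
  have h : Real.exp 1 ≤ max (Real.exp 1) x := le_max_left _ _
  calc (1:ℝ) = Real.log (Real.exp 1) := (Real.log_exp 1).symm
    _ ≤ Log x := Real.log_le_log (Real.exp_pos 1) h

lemma aux_Log_mono : Monotone Log := fun _ _ h =>
  Real.log_le_log (lt_of_lt_of_le (Real.exp_pos 1) (le_max_left _ _)) (max_le_max le_rfl h)

lemma aux_Log_tendsto : Tendsto (fun n : ℕ => Log n) atTop atTop := by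
  have h1 : Tendsto (fun n : ℕ => max (Real.exp 1) (n:ℝ)) atTop atTop :=
    tendsto_atTop_mono (fun n => le_max_right _ _) tendsto_natCast_atTop_atTop
  exact Real.tendsto_log_atTop.comp h1

lemma aux_sqrt_tendsto : Tendsto (fun n : ℕ => Real.sqrt (2 * Log n)) atTop atTop := by
  have h3 : Tendsto (fun n : ℕ => 2 * Log n) atTop atTop :=
    aux_Log_tendsto.const_mul_atTop two_pos
  have h4 : Tendsto Real.sqrt atTop atTop := by
    apply tendsto_atTop_atTop_of_monotone (fun a b h => Real.sqrt_le_sqrt h)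
    intro b
    exact ⟨(max b 0)^2, by rw [Real.sqrt_sq (le_max_right b 0)]; exact le_max_left _ _⟩
  exact h4.comp h3

lemma gauss_Ioi_le {t : ℝ} (ht : 0 ≤ t) :
    gaussianReal 0 1 (Set.Ioi t) ≤ ENNReal.ofReal (Real.exp (-t^2/2)) := by
  rw [gaussianReal_apply_eq_integral 0 one_ne_zero]
  apply ENNReal.ofReal_le_ofReal
  have hint : Integrable (fun x => Real.exp (-t^2/2) * gaussianPDFReal t 1 x) :=
    (integrable_gaussianPDFReal t 1).const_mul _
  calc ∫ x in Set.Ioi t, gaussianPDFReal 0 1 x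
      ≤ ∫ x in Set.Ioi t, Real.exp (-t^2/2) * gaussianPDFReal t 1 x := by
        apply setIntegral_mono_on (integrable_gaussianPDFReal 0 1).integrableOn
          hint.integrableOn measurableSet_Ioi
        intro x hx
        rw [Set.mem_Ioi] at hx
        simp only [gaussianPDFReal, NNReal.coe_one, mul_one, sub_zero]
        rw [mul_comm (Real.exp (-t^2/2)), mul_assoc]
        apply mul_le_mul_of_nonneg_left _ (by positivity)
        rw [← Real.exp_add, Real.exp_le_exp]
        nlinarith [mul_nonneg ht (le_of_lt (sub_pos.mpr hx))]
    _ ≤ ∫ x, Real.exp (-t^2/2) * gaussianPDFReal t 1 x :=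
        setIntegral_le_integral hint (ae_of_all _ fun x =>
          mul_nonneg (Real.exp_nonneg _) (gaussianPDFReal_nonneg _ _ _))
    _ = Real.exp (-t^2/2) := by
        rw [integral_const_mul, integral_gaussianPDFReal_eq_one t one_ne_zero, mul_one]

lemma gauss_Ioi_ge {t : ℝ} (ht : 0 ≤ t) :
    ENNReal.ofReal ((Real.sqrt (2*Real.pi))⁻¹ * Real.exp (-(t+1)^2/2)) ≤
      gaussianReal 0 1 (Set.Ioi t) := by
  refine le_trans ?_ (measure_mono (Set.Ioc_subset_Ioi_self : Set.Ioc t (t+1) ⊆ Set.Ioi t))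
  rw [gaussianReal_apply_eq_integral 0 one_ne_zero]
  apply ENNReal.ofReal_le_ofReal
  set c : ℝ := (Real.sqrt (2*Real.pi))⁻¹ * Real.exp (-(t+1)^2/2) with hc
  have hvol : volume (Set.Ioc t (t+1)) = 1 := by
    rw [Real.volume_Ioc]; norm_num
  calc c = ∫ _x in Set.Ioc t (t+1), c := by
        rw [setIntegral_const, measureReal_def, hvol]; simp
    _ ≤ ∫ x in Set.Ioc t (t+1), gaussianPDFReal 0 1 x := by
        apply setIntegral_mono_on
          ((integrableOn_const_iff (C := c)).mpr (Or.inr (by rw [hvol]; exact ENNReal.one_lt_top)))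
          (integrable_gaussianPDFReal 0 1).integrableOn measurableSet_Ioc
        intro x hx
        obtain ⟨hx1, hx2⟩ := hx
        simp only [gaussianPDFReal, NNReal.coe_one, mul_one, sub_zero, hc]
        apply mul_le_mul_of_nonneg_left _ (by positivity)
        rw [Real.exp_le_exp]
        nlinarith

lemma gauss_Iic_le (t : ℝ) :
    gaussianReal 0 1 (Set.Iic t) ≤
      ENNReal.ofReal (Real.exp (-(gaussianReal 0 1 (Set.Ioi t)).toReal)) := by
  have hne : gaussianReal 0 1 (Set.Ioi t) ≠ ⊤ := measure_ne_top _ _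
  rw [show Set.Iic t = (Set.Ioi t)ᶜ from (Set.compl_Ioi).symm,
    measure_compl measurableSet_Ioi hne, measure_univ]
  set p := (gaussianReal 0 1 (Set.Ioi t)).toReal with hp
  have hp0 : 0 ≤ p := ENNReal.toReal_nonneg
  rw [show gaussianReal 0 1 (Set.Ioi t) = ENNReal.ofReal p from (ENNReal.ofReal_toReal hne).symm,
    ← ENNReal.ofReal_one, ← ENNReal.ofReal_sub _ hp0]
  exact ENNReal.ofReal_le_ofReal (Real.one_sub_le_exp_neg p)

lemma bc_helper {Ω : Type*} [MeasurableSpace Ω] (μ : Measure Ω) [IsProbabilityMeasure μ]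
    {s : ℕ → Set Ω} {g : ℕ → ℝ} (hg0 : ∀ n, 0 ≤ g n) (hg : Summable g)
    (h : ∀ᶠ n in atTop, μ (s n) ≤ ENNReal.ofReal (g n)) :
    ∀ᵐ ω ∂μ, ∀ᶠ n in atTop, ω ∉ s n := by
  obtain ⟨N, hN⟩ := eventually_atTop.mp h
  have hsum : (∑' n, μ (s (n + N))) ≠ ∞ := by
    refine ne_top_of_le_ne_top ?_ (ENNReal.tsum_le_tsum fun n => hN (n+N) (Nat.le_add_left N n))
    rw [← ENNReal.ofReal_tsum_of_nonneg (fun n => hg0 _) ((summable_nat_add_iff N).mpr hg)]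
    exact ENNReal.ofReal_ne_top
  filter_upwards [ae_eventually_notMem hsum] with ω hω
  obtain ⟨M, hM⟩ := eventually_atTop.mp hω
  rw [eventually_atTop]
  refine ⟨M + N, fun n hn => ?_⟩
  have h1 := hM (n - N) (by omega)
  rwa [Nat.sub_add_cancel (by omega)] at h1

lemma aux_inv_sqrt_two_pi : 1/3 ≤ (Real.sqrt (2*Real.pi))⁻¹ := by
  have h9 : Real.sqrt (2*Real.pi) ≤ 3 := by
    have h3 : (3:ℝ) = Real.sqrt 9 := by
      rw [show (9:ℝ) = 3^2 by norm_num, Real.sqrt_sq (by norm_num)]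
    rw [h3]
    exact Real.sqrt_le_sqrt (by nlinarith [Real.pi_le_four])
  have h10 : 0 < Real.sqrt (2*Real.pi) := Real.sqrt_pos.mpr (by positivity)
  calc (1:ℝ)/3 = 3⁻¹ := by norm_num
    _ ≤ (Real.sqrt (2*Real.pi))⁻¹ := inv_anti₀ h10 h9

set_option maxHeartbeats 1000000 in
lemma aux_analytic {ε : ℝ} (hε : 0 < ε) (hε1 : ε < 1) :
    ∀ᶠ n : ℕ in atTop, 2 * Real.log n ≤
      n * ((Real.sqrt (2*Real.pi))⁻¹ *
        Real.exp (-((1-ε) * Real.sqrt (2 * Log n) + 1)^2/2)) := by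
  have hT : Tendsto (fun n : ℕ => ε^2 * Log n) atTop atTop :=
    aux_Log_tendsto.const_mul_atTop (by positivity)
  filter_upwards [eventually_ge_atTop 3, hT.eventually_ge_atTop 58] with n hn3 hn58
  set L := Log (n:ℝ) with hLdef
  have hL1 : 1 ≤ L := aux_Log_ge_one _
  have hLpos : 0 < L := by linarith
  have hen : Real.exp 1 ≤ (n:ℝ) := by
    have h3 : (3:ℝ) ≤ n := by exact_mod_cast hn3
    have := Real.exp_one_lt_d9
    linarith
  have hnpos : (0:ℝ) < n := by linarith [Real.exp_pos 1]
  have hLlog : L = Real.log n := by rw [hLdef, Log, max_eq_right hen]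
  have hnL' : (n:ℝ) = Real.exp L := by rw [hLlog, Real.exp_log hnpos]
  set s := Real.sqrt (2*L) with hsdef
  have hs0 : 0 ≤ s := Real.sqrt_nonneg _
  have hs2 : s^2 = 2*L := Real.sq_sqrt (by linarith)
  set u := Real.sqrt (24*L) with hudef
  have hu0 : 0 ≤ u := Real.sqrt_nonneg _
  have hu2 : u^2 = 24*L := Real.sq_sqrt (by linarith)
  have h1 : 8*(ε*s) ≤ 2*(ε^2*L) + 16 := by nlinarith [sq_nonneg (ε*s - 4)]
  have h2 : 48*(ε*u) ≤ 24*(ε^2*L) + 576 := by nlinarith [sq_nonneg (ε*u - 24)]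
  set y := ε*L - s - 1/2 with hydef
  have hy : u ≤ y := by
    rw [hydef]
    nlinarith [h1, h2, hn58, hε, hε1, mul_pos hε hLpos]
  clear_value L s u y
  have hy0 : 0 ≤ y := le_trans hu0 hy
  have hexpy : 6*L ≤ Real.exp y := by
    have h6 : y/2 + 1 ≤ Real.exp (y/2) := Real.add_one_le_exp _
    have hE : u/2 + 1 ≤ Real.exp (y/2) := by linarith
    have h7 : Real.exp (y/2) * Real.exp (y/2) = Real.exp y := by
      rw [← Real.exp_add]; ring_nf
    nlinarith [hE, h7, hu2, hu0, Real.exp_pos (y/2)]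
  have h8 := aux_inv_sqrt_two_pi
  have hA : ((1-ε)*s + 1)^2/2 ≤ (1-ε)^2*L + s + 1/2 := by
    have expand : ((1-ε)*s + 1)^2/2 = (1-ε)^2*(s^2)/2 + (1-ε)*s + 1/2 := by ring
    have hes : (1-ε)*s ≤ s := by nlinarith [mul_nonneg hε.le hs0]
    rw [expand, hs2]
    linarith
  have hyle : y ≤ L - ((1-ε)^2*L + s + 1/2) := by
    rw [hydef]
    nlinarith [mul_nonneg (mul_nonneg hε.le (sub_nonneg.mpr hε1.le)) hLpos.le]
  rw [← hLlog, hnL']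
  calc 2*L ≤ (1/3) * Real.exp y := by linarith
    _ ≤ (Real.sqrt (2*Real.pi))⁻¹ * Real.exp (L + -(((1-ε)*s+1)^2/2)) := by
        apply mul_le_mul h8 (Real.exp_le_exp.mpr (by linarith)) (Real.exp_nonneg _)
          (by positivity)
    _ = Real.exp L * ((Real.sqrt (2*Real.pi))⁻¹ * Real.exp (-((1-ε)*s+1)^2/2)) := by
        rw [Real.exp_add]
        ring_nf

lemma upper_meas {ε : ℝ} (hε : 0 < ε) :
    ∀ᶠ n : ℕ in atTop, gaussianReal 0 1 (Set.Ioi ((1+ε) * Real.sqrt (2 * Log n))) ≤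
      ENNReal.ofReal ((n:ℝ) ^ (-(1+ε)^2 : ℝ)) := by
  filter_upwards [eventually_ge_atTop 1] with n hn
  have hn0 : (0:ℝ) < n := by exact_mod_cast hn
  have ht0 : 0 ≤ (1+ε) * Real.sqrt (2 * Log n) :=
    mul_nonneg (by linarith) (Real.sqrt_nonneg _)
  refine le_trans (gauss_Ioi_le ht0) (ENNReal.ofReal_le_ofReal ?_)
  have h2L : 0 ≤ 2 * Log (n:ℝ) := by linarith [aux_Log_ge_one (n:ℝ)]
  have hM : (0:ℝ) < max (Real.exp 1) n := lt_of_lt_of_le (Real.exp_pos 1) (le_max_left _ _)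
  calc Real.exp (-((1+ε) * Real.sqrt (2 * Log n))^2/2)
      = (max (Real.exp 1) (n:ℝ)) ^ (-(1+ε)^2 : ℝ) := by
        rw [Real.rpow_def_of_pos hM]
        congr 1
        rw [mul_pow, Real.sq_sqrt h2L,
          show Real.log (max (Real.exp 1) (n:ℝ)) = Log (n:ℝ) from rfl]
        ring
    _ ≤ (n:ℝ) ^ (-(1+ε)^2 : ℝ) :=
        Real.rpow_le_rpow_of_nonpos hn0 (le_max_right _ _) (neg_nonpos.mpr (by positivity))

set_option maxHeartbeats 1000000 in
theorem stmt19 {Ω : Type*} [MeasurableSpace Ω] (μ : Measure Ω) [IsProbabilityMeasure μ]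
    (X : ℕ → Ω → ℝ) (hmeas : ∀ n, Measurable (X n))
    (hindep : iIndepFun X μ)
    (hident : ∀ n, IdentDistrib (X n) (X 0) μ μ)
    (hgauss : ∀ n, μ.map (X n) = gaussianReal 0 1) :
    ∀ᵐ ω ∂μ,
      Tendsto (fun n : ℕ => pmax X n ω / Real.sqrt (2 * Log n)) atTop (nhds 1) := by
  have hSpos : ∀ n : ℕ, 0 < Real.sqrt (2 * Log n) := fun n =>
    Real.sqrt_pos.mpr (by linarith [aux_Log_ge_one ((n:ℝ))])
  have key : ∀ ε : ℝ, 0 < ε → ε < 1 → ∀ᵐ ω ∂μ, ∀ᶠ n : ℕ in atTop,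
      |pmax X n ω / Real.sqrt (2 * Log n) - 1| ≤ 2 * ε := by
    intro ε hε hε1
    have hU : ∀ᵐ ω ∂μ, ∀ᶠ n in atTop,
        ω ∉ X n ⁻¹' Set.Ioi ((1+ε) * Real.sqrt (2 * Log n)) := by
      apply bc_helper μ (g := fun n => (n:ℝ) ^ (-(1+ε)^2 : ℝ))
        (fun n => Real.rpow_nonneg (Nat.cast_nonneg n) _)
        (Real.summable_nat_rpow.mpr (by nlinarith))
      filter_upwards [upper_meas hε] with n hn
      rwa [← Measure.map_apply (hmeas n) measurableSet_Ioi, hgauss n]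
    have hL : ∀ᵐ ω ∂μ, ∀ᶠ n in atTop,
        ω ∉ {ω' | ∀ k ∈ Finset.range n, X k ω' ≤ (1-ε) * Real.sqrt (2 * Log n)} := by
      apply bc_helper μ (g := fun n => (n:ℝ) ^ (-2 : ℝ))
        (fun n => Real.rpow_nonneg (Nat.cast_nonneg n) _)
        (Real.summable_nat_rpow.mpr (by norm_num))
      filter_upwards [aux_analytic hε hε1, eventually_ge_atTop 1] with n han hn1
      have hn0 : (0:ℝ) < n := by exact_mod_cast hn1
      set t := (1-ε) * Real.sqrt (2 * Log n) with htdef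
      have ht0 : 0 ≤ t := mul_nonneg (by linarith) (Real.sqrt_nonneg _)
      have hset : {ω' | ∀ k ∈ Finset.range n, X k ω' ≤ t} =
          ⋂ k ∈ Finset.range n, X k ⁻¹' Set.Iic t := by
        ext ω'; simp [Set.mem_iInter]
      have hprod : μ {ω' | ∀ k ∈ Finset.range n, X k ω' ≤ t} =
          (gaussianReal 0 1 (Set.Iic t))^n := by
        rw [hset, hindep.measure_inter_preimage_eq_mul (Finset.range n)
          (sets := fun _ => Set.Iic t) (fun i _ => measurableSet_Iic)]
        have hone : ∀ k, μ (X k ⁻¹' Set.Iic t) = gaussianReal 0 1 (Set.Iic t) := fun k => by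
          rw [← Measure.map_apply (hmeas k) measurableSet_Iic, hgauss k]
        simp [hone, Finset.prod_const, Finset.card_range]
      set p := (gaussianReal 0 1 (Set.Ioi t)).toReal with hpdef
      have hp0 : 0 ≤ p := ENNReal.toReal_nonneg
      have hq : (Real.sqrt (2*Real.pi))⁻¹ * Real.exp (-(t+1)^2/2) ≤ p :=
        (ENNReal.ofReal_le_iff_le_toReal (measure_ne_top _ _)).mp (gauss_Ioi_ge ht0)
      have hnp : 2 * Real.log n ≤ n * p := by
        refine le_trans han ?_
        exact mul_le_mul_of_nonneg_left hq hn0.le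
      calc μ {ω' | ∀ k ∈ Finset.range n, X k ω' ≤ t}
          = (gaussianReal 0 1 (Set.Iic t))^n := hprod
        _ ≤ (ENNReal.ofReal (Real.exp (-p)))^n :=
            pow_le_pow_left₀ zero_le (gauss_Iic_le t) n
        _ = ENNReal.ofReal ((Real.exp (-p))^n) := (ENNReal.ofReal_pow (Real.exp_nonneg _) n).symm
        _ ≤ ENNReal.ofReal ((n:ℝ) ^ (-2:ℝ)) := by
            apply ENNReal.ofReal_le_ofReal
            rw [← Real.exp_nat_mul, Real.rpow_def_of_pos hn0]
            apply Real.exp_le_exp.mpr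
            nlinarith [hnp]
    filter_upwards [hU, hL] with ω hωU hωL
    obtain ⟨N1, hN1⟩ := eventually_atTop.mp hωU
    have hBev : ∀ᶠ n : ℕ in atTop, pmax X (N1+1) ω ≤ ε * Real.sqrt (2 * Log n) := by
      filter_upwards [aux_sqrt_tendsto.eventually_ge_atTop (pmax X (N1+1) ω / ε)] with n hn
      calc pmax X (N1+1) ω = (pmax X (N1+1) ω / ε) * ε := by field_simp
        _ ≤ Real.sqrt (2 * Log n) * ε := mul_le_mul_of_nonneg_right hn hε.le
        _ = ε * Real.sqrt (2 * Log n) := mul_comm _ _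
    filter_upwards [hBev, hωL, eventually_ge_atTop (N1+1)] with n hB hLn hnN
    set S := Real.sqrt (2 * Log n) with hSdef
    have hS : 0 < S := hSpos n
    have hn0 : n ≠ 0 := by omega
    have hup : pmax X n ω ≤ (1 + 2*ε) * S := by
      rw [pmax, dif_neg hn0]
      apply Finset.sup'_le
      intro k hk
      rw [Finset.mem_range] at hk
      by_cases hkN : k ≤ N1
      · have h1 : X k ω ≤ pmax X (N1+1) ω := by
          rw [pmax, dif_neg (Nat.succ_ne_zero N1)]
          exact Finset.le_sup' (f := fun j => X j ω) (Finset.mem_range.mpr (by omega))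
        nlinarith [hS.le, hε.le]
      · push_neg at hkN
        have h1 : ω ∉ X k ⁻¹' Set.Ioi ((1+ε) * Real.sqrt (2 * Log k)) := hN1 k (by omega)
        simp only [Set.mem_preimage, Set.mem_Ioi, not_lt] at h1
        have h2 : Real.sqrt (2 * Log k) ≤ S := by
          rw [hSdef]
          apply Real.sqrt_le_sqrt
          have := aux_Log_mono (show ((k:ℝ)) ≤ n by exact_mod_cast hk.le)
          linarith
        nlinarith [hS.le, hε.le, Real.sqrt_nonneg (2 * Log (k:ℝ))]
    have hlow : (1 - ε) * S ≤ pmax X n ω := by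
      have h1 := hLn
      simp only [Set.mem_setOf_eq, not_forall] at h1
      obtain ⟨k, hk, hgt⟩ := h1
      rw [pmax, dif_neg hn0]
      calc (1-ε)*S ≤ X k ω := (not_le.mp hgt).le
        _ ≤ _ := Finset.le_sup' (f := fun j => X j ω) hk
    rw [abs_le]
    constructor
    · have h3 : (1-ε) ≤ pmax X n ω / S := (le_div_iff₀ hS).mpr (by linarith)
      linarith
    · have h4 : pmax X n ω / S ≤ 1 + 2*ε := (div_le_iff₀ hS).mpr (by linarith)
      linarith
  have key2 : ∀ᵐ ω ∂μ, ∀ m : ℕ, ∀ᶠ n : ℕ in atTop,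
      |pmax X n ω / Real.sqrt (2 * Log n) - 1| ≤ 2 * (1/((m:ℝ)+2)) :=
    ae_all_iff.mpr fun m => key (1/((m:ℝ)+2)) (by positivity) (by
      rw [div_lt_one (by positivity)]
      have hm : (0:ℝ) ≤ m := Nat.cast_nonneg m
      linarith)
  filter_upwards [key2] with ω hω
  rw [Metric.tendsto_atTop]
  intro δ hδ
  obtain ⟨m, hm⟩ := exists_nat_gt (2/δ)
  obtain ⟨N, hN⟩ := eventually_atTop.mp (hω m)
  refine ⟨N, fun n hn => ?_⟩
  have h1 := hN n hn
  rw [Real.dist_eq]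
  have hm2 : (0:ℝ) < (m:ℝ) + 2 := by positivity
  have h2 : 2 * (1/((m:ℝ)+2)) < δ := by
    have h3 : 2/δ < (m:ℝ) + 2 := by linarith [hm, (Nat.cast_nonneg m : (0:ℝ) ≤ (m:ℝ))]
    have h4 : 2 < ((m:ℝ)+2) * δ := (div_lt_iff₀ hδ).mp h3
    rw [mul_one_div, div_lt_iff₀ hm2]
    linarith
  exact lt_of_le_of_lt h1 h2
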